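/- Let b, f be monotone functions on a complete lattice L with f ∘ b ≤ b ∘ f (f is b-compatible). Then f(b_α) ≤ b_α for every ordinal α of the final sequence of b, and consequently f ≤ t where t is the companion of b. -/

import Mathlib

theorem compatible_below_companion {L : Type*} [CompleteLattice L]
    (b f : L → L) (hb : Monotone b) (hf : Monotone f)
    (hcompat : ∀ x : L, f (b x) ≤ b (f x))
    (s : Ordinal → L) (h0 : s 0 = ⊤)
    (hsucc : ∀ α : Ordinal, s (α + 1) = b (s α))
    (hlim : ∀ α : Ordinal, Order.IsSuccLimit α → s α = ⨅ (β : Ordinal) (_ : β < α), s β)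
    (t : L → L) (ht : ∀ x, t x = ⨅ (α : Ordinal) (_ : x ≤ s α), s α) :
    (∀ α : Ordinal, f (s α) ≤ s α) ∧ ∀ x : L, f x ≤ t x := by
  have main : ∀ α : Ordinal, f (s α) ≤ s α := by
    intro α
    induction α using Ordinal.limitRecOn with
    | zero => rw [h0]; exact le_top
    | add_one α ih =>
        rw [hsucc]
        exact le_trans (hcompat _) (hb ih)
    | limit α hα ih =>
        conv_rhs => rw [hlim α hα]
        refine le_iInf fun β => le_iInf fun hβ => ?_
        have hle : s α ≤ s β := by
          conv_lhs => rw [hlim α hα]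
          exact iInf_le_of_le β (iInf_le _ hβ)
        exact le_trans (hf hle) (ih β hβ)
  refine ⟨main, fun x => ?_⟩
  rw [ht]
  exact le_iInf fun α => le_iInf fun hx => le_trans (hf hx) (main α)
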